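/- For n ≥ 2, let ∼ be the equivalence relation on the set B_n of bracketings of size n that relates t and t' if and only if d_{G(t)}(x_i) ≡ d_{G(t')}(x_i) (mod 2) for all i ∈ {1,…,n}. Then the number of equivalence classes of ∼ is exactly 2^{n−2}. -/

import Mathlib

namespace AssocSpec

/-- Bracketings of products `x₁ x₂ ⋯ xₙ` represented as binary trees whose
leaves, read from left to right, are the variables `x₁, …, xₙ`. -/
inductive BTree : Type
  | leaf : BTree
  | node : BTree → BTree → BTree

namespace BTree

/-- The size of a bracketing: its number of variables (leaves). -/
def size : BTree → ℕ
  | leaf => 1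
  | node l r => l.size + r.size

/-- Evaluate a bracketing in a magma `(A, op)`, the leaves taking the values
`f k, f (k+1), …` from left to right. -/
def evalFrom {A : Type*} (op : A → A → A) : BTree → (ℕ → A) → ℕ → A
  | leaf, f, k => f k
  | node l r, f, k => op (evalFrom op l f k) (evalFrom op r f (k + l.size))

/-- The term operation induced by a bracketing `t` on a magma `(A, op)`;
the `i`-th variable (0-indexed) takes the value `f i`. -/
def termOp {A : Type*} (op : A → A → A) (t : BTree) (f : ℕ → A) : A :=
  evalFrom op t f 0

/-- The depth sequence of the DFS tree `G(t)` of a bracketing `t`: the `i`-th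
entry is the depth of the `i`-th variable (0-indexed) in `G(t)`. -/
def depths : BTree → List ℕ
  | leaf => [0]
  | node l r => l.depths ++ r.depths.map (· + 1)

/-- The depth of the `i`-th variable (0-indexed) in the DFS tree `G(t)`. -/
def depth (t : BTree) (i : ℕ) : ℕ := t.depths.getD i 0

/-- The height of the DFS tree `G(t)`: the maximum depth of a variable. -/
def height (t : BTree) : ℕ := t.depths.foldr max 0

/-- The edges of the DFS tree `G(t)`, the variables being indexed from the
given offset: `(p, c)` is an edge iff `x_p` is the parent of `x_c`. -/
def edgesFrom : BTree → ℕ → List (ℕ × ℕ)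
  | leaf, _ => []
  | node l r, k => (k, k + l.size) :: (l.edgesFrom k ++ r.edgesFrom (k + l.size))

/-- The edges of the DFS tree `G(t)` (variables indexed from `0`). -/
def edges (t : BTree) : List (ℕ × ℕ) := t.edgesFrom 0

end BTree

open Classical in
/-- The operation of the graph algebra of the digraph with vertex set `V` and
edge relation `E`; `none` plays the role of `∞`. -/
noncomputable def gaOp {V : Type*} (E : V → V → Prop) :
    Option V → Option V → Option V
  | some x, some y => if E x y then some x else none
  | _, _ => none

/-- The magma `(A, op)` satisfies the bracketing identity `t ≈ t'`. -/
def Satisfies {A : Type*} (op : A → A → A) (t t' : BTree) : Prop :=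
  ∀ f : ℕ → A, BTree.termOp op t f = BTree.termOp op t' f

/-- The `n`-th member `s_n` of the associative spectrum of the magma `(A, op)`:
the number of distinct term operations induced by bracketings of size `n`. -/
noncomputable def spectrum {A : Type*} (op : A → A → A) (n : ℕ) : ℕ :=
  Set.ncard {g : (ℕ → A) → A | ∃ t : BTree, t.size = n ∧ g = BTree.termOp op t}

/-- Reachability (by a walk) in the digraph with edge relation `E`. -/
def Reach {V : Type*} (E : V → V → Prop) : V → V → Prop :=
  Relation.ReflTransGen E

/-- `u` and `v` lie in the same strongly connected component. -/
def SameSCC {V : Type*} (E : V → V → Prop) (u v : V) : Prop :=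
  Reach E u v ∧ Reach E v u

/-- The strongly connected component of `v`, as a set of vertices. -/
def scc {V : Type*} (E : V → V → Prop) (v : V) : Set V :=
  {u | SameSCC E u v}

/-- `v` lies in a nontrivial strongly connected component (one carrying at
least one edge), i.e. `v` lies on a closed walk of positive length. -/
def InNontrivialSCC {V : Type*} (E : V → V → Prop) (v : V) : Prop :=
  ∃ u, E v u ∧ Reach E u v

/-- The induced subgraph on the set `K` (with the edge relation `E`) is an
`m`-whirl: `K` is partitioned into blocks `B 0, …, B (m-1)` so that edges go
exactly from each block to the cyclically next one. -/
def IsWhirlOn {V : Type*} (E : V → V → Prop) (K : Set V) (m : ℕ) : Prop :=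
  ∃ B : ZMod m → Set V,
    (∀ i, (B i).Nonempty) ∧
    (∀ i, B i ⊆ K) ∧
    (∀ x ∈ K, ∃! i, x ∈ B i) ∧
    (∀ x ∈ K, ∀ y ∈ K, (E x y ↔ ∃ i, x ∈ B i ∧ y ∈ B (i + 1)))

/-- `p 0 → p 1 → ⋯ → p len` is a path (a walk with pairwise distinct
vertices) in the digraph with edge relation `E`. -/
def IsPath {V : Type*} (E : V → V → Prop) (len : ℕ) (p : ℕ → V) : Prop :=
  (∀ i < len, E (p i) (p (i + 1))) ∧
  (∀ i ≤ len, ∀ j ≤ len, p i = p j → i = j)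

/-- The walk `p 0 → ⋯ → p len` is pleasant: all its vertices belong to
trivial strongly connected components. -/
def IsPleasant {V : Type*} (E : V → V → Prop) (len : ℕ) (p : ℕ → V) : Prop :=
  ∀ i ≤ len, ¬ InNontrivialSCC E (p i)

/-- The connected component `K` (of an undirected graph) is complete
bipartite: it splits into two nonempty parts with edges exactly between
vertices of different parts. -/
def IsCompleteBipartiteOn {V : Type*} (E : V → V → Prop) (K : Set V) : Prop :=
  ∃ B1 B2 : Set V, B1.Nonempty ∧ B2.Nonempty ∧ B1 ∪ B2 = K ∧ B1 ∩ B2 = ∅ ∧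
    ∀ x ∈ K, ∀ y ∈ K, (E x y ↔ (x ∈ B1 ∧ y ∈ B2) ∨ (x ∈ B2 ∧ y ∈ B1))

/-- A DFS tree of size `n`: a rooted directed tree on the vertices
`x₁, …, xₙ` (here `Fin n`, the root being `0`), given by its parent function,
such that the parent of every non-root vertex precedes it and the vertex set
of the induced subtree rooted at any vertex `i` is an interval `[i, i']`.
(The parent of the root is, by convention, the root itself.) -/
structure DFSTree (n : ℕ) where
  parent : Fin n → Fin n
  parent_lt : ∀ i : Fin n, 0 < (i : ℕ) → (parent i : ℕ) < (i : ℕ)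
  parent_root : ∀ i : Fin n, (i : ℕ) = 0 → parent i = i
  interval : ∀ i j k : Fin n, i ≤ j → j ≤ k →
    (∃ a : ℕ, parent^[a] k = i) → (∃ a : ℕ, parent^[a] j = i)

/-- The depth of the vertex `i` in a DFS tree: the length of the path from
the root to `i`. -/
noncomputable def DFSTree.depth {n : ℕ} (T : DFSTree n) (i : Fin n) : ℕ :=
  sInf {k : ℕ | (T.parent^[k] i : ℕ) = 0}

/-- The height of a DFS tree: the maximum depth of a vertex. -/
noncomputable def DFSTree.height {n : ℕ} (T : DFSTree n) : ℕ :=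
  Finset.univ.sup fun i => T.depth i

/-- The vertex `i` is a leaf (childless vertex) of the DFS tree `T`. -/
def DFSTree.IsLeaf {n : ℕ} (T : DFSTree n) (i : Fin n) : Prop :=
  ∀ j : Fin n, T.parent j = i → j = i

/-- `t_h(n)`: the number of DFS trees of size `n` of height at most `h`. -/
noncomputable def tcount (h n : ℕ) : ℕ :=
  Nat.card {T : DFSTree n // T.height ≤ h}

/-- `d` is a zag sequence: `d₁ = 0`, `d₂ = 1`, and
`1 ≤ d_{i+1} ≤ d_i + 1` for all `i` (1-indexed as in the paper;
here `d : Fin n → ℕ` is 0-indexed). -/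
def IsZag {n : ℕ} (d : Fin n → ℕ) : Prop :=
  (∀ h : 0 < n, d ⟨0, h⟩ = 0) ∧
  (∀ h : 1 < n, d ⟨1, h⟩ = 1) ∧
  (∀ i : ℕ, ∀ h : i + 1 < n,
    1 ≤ d ⟨i + 1, h⟩ ∧ d ⟨i + 1, h⟩ ≤ d ⟨i, Nat.lt_of_succ_lt h⟩ + 1)

/-- `M(t,t')`: the largest `m` such that the depth sequences of the DFS trees
of the bracketings `t` and `t'` are congruent modulo `m`. -/
noncomputable def Mval (t t' : BTree) : ℕ :=
  sSup {m : ℕ | ∀ i < t.size, t.depth i ≡ t'.depth i [MOD m]}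

end AssocSpec

namespace Stmt10Aux
open AssocSpec AssocSpec.BTree

lemma length_depths (t : BTree) : t.depths.length = t.size := by
  induction t with
  | leaf => rfl
  | node l r ihl ihr => simp [BTree.depths, BTree.size, ihl, ihr]

lemma one_le_size (t : BTree) : 1 ≤ t.size := by
  induction t with
  | leaf => simp [BTree.size]
  | node l r ihl ihr => simp [BTree.size]; omega

lemma depths_cons (t : BTree) : ∃ L, t.depths = 0 :: L := by
  induction t with
  | leaf => exact ⟨[], rfl⟩
  | node l r ihl ihr =>
    obtain ⟨L, hL⟩ := ihl
    exact ⟨L ++ r.depths.map (· + 1), by simp [BTree.depths, hL]⟩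

lemma depths_cons2 (t : BTree) (h : 2 ≤ t.size) : ∃ L, t.depths = 0 :: 1 :: L := by
  induction t with
  | leaf => simp [BTree.size] at h
  | node l r ihl ihr =>
    cases l with
    | leaf =>
      obtain ⟨L, hL⟩ := depths_cons r
      exact ⟨L.map (· + 1), by simp [BTree.depths, hL]⟩
    | node a b =>
      have h2 : 2 ≤ (BTree.node a b).size := by
        have := one_le_size a; have := one_le_size b
        simp [BTree.size]; omega
      obtain ⟨L, hL⟩ := ihl h2
      refine ⟨L ++ r.depths.map (· + 1), ?_⟩
      rw [show ((BTree.node a b).node r).depths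
          = (BTree.node a b).depths ++ r.depths.map (· + 1) from rfl, hL]
      rfl

lemma depth_zero (t : BTree) : t.depth 0 = 0 := by
  obtain ⟨L, hL⟩ := depths_cons t
  simp [BTree.depth, hL]

lemma depth_one (t : BTree) (h : 2 ≤ t.size) : t.depth 1 = 1 := by
  obtain ⟨L, hL⟩ := depths_cons2 t h
  simp [BTree.depth, hL]

/-- One extension step in building a tree with prescribed depth parities. -/
def ext : BTree × BTree → Bool → BTree × BTree
  | (c, s), false => (.node c s, .leaf)
  | (c, s), true => (c, .node s .leaf)

/-- A tree whose depth sequence is `0 :: 1 :: bs.map (fun b => cond b 2 1)`. -/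
def build (bs : List Bool) : BTree :=
  BTree.node (bs.foldl ext (.leaf, .leaf)).1 (bs.foldl ext (.leaf, .leaf)).2

lemma build_depths (bs : List Bool) :
    (build bs).depths = 0 :: 1 :: bs.map (fun b => cond b 2 1) := by
  induction bs using List.reverseRecOn with
  | nil => rfl
  | append_singleton bs b ih =>
    have hfold : bs.foldl ext (.leaf, .leaf) =
        ((bs.foldl ext (.leaf, .leaf)).1, (bs.foldl ext (.leaf, .leaf)).2) := rfl
    cases b with
    | false =>
      have : build (bs ++ [false]) =
          BTree.node (build bs) BTree.leaf := by
        simp only [build, List.foldl_append, List.foldl_cons, List.foldl_nil]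
        rw [hfold]; rfl
      rw [this, show (BTree.node (build bs) BTree.leaf).depths
          = (build bs).depths ++ [1] from rfl, ih]
      simp
    | true =>
      have : build (bs ++ [true]) =
          BTree.node (bs.foldl ext (.leaf, .leaf)).1
            (BTree.node (bs.foldl ext (.leaf, .leaf)).2 BTree.leaf) := by
        simp only [build, List.foldl_append, List.foldl_cons, List.foldl_nil]
        rw [hfold]; rfl
      rw [this]
      have ih' : (BTree.node (bs.foldl ext (.leaf, .leaf)).1
          (bs.foldl ext (.leaf, .leaf)).2).depths
          = 0 :: 1 :: bs.map (fun b => cond b 2 1) := ih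
      simp only [BTree.depths] at ih' ⊢
      simp [← List.append_assoc, ih']

lemma build_size (bs : List Bool) : (build bs).size = bs.length + 2 := by
  rw [← length_depths, build_depths]; simp

end Stmt10Aux

open AssocSpec in
/-- For `n ≥ 2`, the equivalence relation on `B_n` relating
`t` and `t'` iff `d_{G(t)}(x_i) ≡ d_{G(t')}(x_i) (mod 2)` for all `i` has
exactly `2^(n-2)` equivalence classes. -/
theorem stmt10 (n : ℕ) (hn : 2 ≤ n) :
    Set.ncard {C : Set {t : BTree // t.size = n} |
      ∃ t : {t : BTree // t.size = n},
        C = {t' : {t : BTree // t.size = n} | ∀ i < n,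
          (t : BTree).depth i ≡ (t' : BTree).depth i [MOD 2]}} = 2 ^ (n - 2) := by
  classical
  set K : {t : BTree // t.size = n} → (Fin (n - 2) → ZMod 2) :=
    fun t j => ((t : BTree).depth ((j : ℕ) + 2) : ZMod 2) with hK
  set F : (Fin (n - 2) → ZMod 2) → Set {t : BTree // t.size = n} :=
    fun v => {t | K t = v} with hF
  have hKsurj : Function.Surjective K := by
    intro v
    set bs : List Bool := List.ofFn (fun j : Fin (n - 2) => decide (v j = 0)) with hbs
    refine ⟨⟨Stmt10Aux.build bs, ?_⟩, ?_⟩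
    · rw [Stmt10Aux.build_size]; simp [hbs]; omega
    · funext j
      show ((Stmt10Aux.build bs).depth ((j : ℕ) + 2) : ZMod 2) = v j
      have hj : (j : ℕ) < (bs.map (fun b => cond b 2 1)).length := by
        simp [hbs]
      rw [BTree.depth, Stmt10Aux.build_depths, List.getD_cons_succ,
        List.getD_cons_succ, List.getD_eq_getElem _ _ hj]
      simp only [List.getElem_map, hbs, List.getElem_ofFn, Fin.eta]
      generalize v j = x
      revert x; decide
  have key : ∀ t t' : {t : BTree // t.size = n},
      (∀ i < n, (t : BTree).depth i ≡ (t' : BTree).depth i [MOD 2]) ↔ K t' = K t := by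
    intro t t'
    constructor
    · intro h
      funext j
      have hj : (j : ℕ) + 2 < n := by have := j.isLt; omega
      exact ((ZMod.natCast_eq_natCast_iff _ _ _).mpr (h _ hj)).symm
    · intro h i hi
      match i, hi with
      | 0, _ => rw [Stmt10Aux.depth_zero, Stmt10Aux.depth_zero]
      | 1, _ =>
        rw [Stmt10Aux.depth_one _ (by rw [t.2]; exact hn),
          Stmt10Aux.depth_one _ (by rw [t'.2]; exact hn)]
      | (m + 2), hi =>
        have hj := congrFun h ⟨m, by omega⟩
        exact ((ZMod.natCast_eq_natCast_iff _ _ _).mp hj).symm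
  have hFK : ∀ t : {t : BTree // t.size = n},
      {t' : {t : BTree // t.size = n} | ∀ i < n,
        (t : BTree).depth i ≡ (t' : BTree).depth i [MOD 2]} = F (K t) := by
    intro t
    ext t'
    exact key t t'
  have hS : {C : Set {t : BTree // t.size = n} |
      ∃ t : {t : BTree // t.size = n},
        C = {t' : {t : BTree // t.size = n} | ∀ i < n,
          (t : BTree).depth i ≡ (t' : BTree).depth i [MOD 2]}} = Set.range (F ∘ K) := by
    ext C
    constructor
    · rintro ⟨t, rfl⟩; exact ⟨t, (hFK t).symm⟩
    · rintro ⟨t, rfl⟩; exact ⟨t, (hFK t).symm⟩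
  have hFinj : Function.Injective F := by
    intro v w hvw
    obtain ⟨t, rfl⟩ := hKsurj v
    have ht : t ∈ F (K t) := rfl
    rw [hvw] at ht
    exact ht
  rw [hS, Set.range_comp, hKsurj.range_eq, Set.ncard_image_of_injective _ hFinj,
    Set.ncard_univ, Nat.card_eq_fintype_card, Fintype.card_fun]
  simp [ZMod.card]
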